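/- The heating perturbation with δs = f, δ(n√(1+u²)) = 0, δP_i = 0 has unique solution δn = n u²(nT + ∂p/∂s) f / [(ρ+p)(1+(1-c_s²)u²)] and δu^i = -(1+u²)(nT + ∂p/∂s) f u^i / [(ρ+p)(1+(1-c_s²)u²)], and the induced change in ε = (ρ+p)(1+u²) - p is δε = nTf. -/

import Mathlib

/- STATEMENT 16: The heating perturbation δs = f, δ(n√(1+u²)) = 0, δP = 0
has the unique solution
δn = n u²(nT + ∂p/∂s) f/[(ρ+p)(1+(1-c_s²)u²)],
δu = -(1+u²)(nT + ∂p/∂s) f/[(ρ+p)(1+(1-c_s²)u²)] u,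
and the induced change of ε = (ρ+p)(1+u²) - p is δε = nTf.
Here δρ = (∂ρ/∂n)δn + (∂ρ/∂s)f, δp = c_s²(∂ρ/∂n)δn + (∂p/∂s)f,
with ρ+p = n∂ρ/∂n, nT = ∂ρ/∂s (Gibbs-Duhem). -/
theorem stmt16 {E : Type*} [NormedAddCommGroup E] [InnerProductSpace ℝ E]
    (ρ p n Dρn Dρs Dps T cs2 f : ℝ) (u : E) (u2 : ℝ)
    (hu2 : u2 = inner ℝ u u) (hn : 0 < n) (hρp : 0 < ρ + p)
    (hGD : ρ + p = n * Dρn) (hT : n * T = Dρs) (hTpos : 0 < T)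
    (hcs : 0 ≤ cs2 ∧ cs2 ≤ 1)
    (δn : ℝ) (δu : E)
    (hδn : δn = n * u2 * (n * T + Dps) * f / ((ρ + p) * (1 + (1 - cs2) * u2)))
    (hδu : δu = (-((1 + u2) * (n * T + Dps) * f / ((ρ + p) * (1 + (1 - cs2) * u2)))) • u) :
    -- (δn, δu) satisfies the linearized conditions δ(n√(1+u²)) = 0, δP = 0 :
    (δn * Real.sqrt (1 + u2) + n * (inner ℝ u δu : ℝ) / Real.sqrt (1 + u2) = 0)
    ∧ (((Dρn * δn + Dρs * f) + (cs2 * Dρn * δn + Dps * f)) * Real.sqrt (1 + u2)) • u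
        + ((ρ + p) * ((inner ℝ u δu : ℝ) / Real.sqrt (1 + u2))) • u
        + ((ρ + p) * Real.sqrt (1 + u2)) • δu = 0
    -- uniqueness:
    ∧ (∀ δn' : ℝ, ∀ δu' : E,
        (δn' * Real.sqrt (1 + u2) + n * (inner ℝ u δu' : ℝ) / Real.sqrt (1 + u2) = 0)
        → (((Dρn * δn' + Dρs * f) + (cs2 * Dρn * δn' + Dps * f)) * Real.sqrt (1 + u2)) • u
            + ((ρ + p) * ((inner ℝ u δu' : ℝ) / Real.sqrt (1 + u2))) • u
            + ((ρ + p) * Real.sqrt (1 + u2)) • δu' = 0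
        → δn' = δn ∧ δu' = δu)
    -- induced change in ε = (ρ+p)(1+u²) - p is nTf:
    ∧ ((Dρn * δn + Dρs * f) + (cs2 * Dρn * δn + Dps * f)) * (1 + u2)
        + (ρ + p) * (2 * (inner ℝ u δu : ℝ)) - (cs2 * Dρn * δn + Dps * f)
        = n * T * f := by
  subst hT
  have hu0 : (0:ℝ) ≤ u2 := by rw [hu2]; exact real_inner_self_nonneg
  have h1p : (0:ℝ) < 1 + u2 := by linarith
  set s := Real.sqrt (1 + u2) with hsdef
  have hsp : 0 < s := Real.sqrt_pos.2 h1p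
  have hss : s * s = 1 + u2 := Real.mul_self_sqrt h1p.le
  have hsne : s ≠ 0 := ne_of_gt hsp
  have hsinv : s⁻¹ = s / (1 + u2) := by
    rw [eq_div_iff h1p.ne', ← hss]; field_simp
  have hEp : (0:ℝ) < 1 + (1 - cs2) * u2 := by nlinarith [hcs.1, hcs.2]
  have hDne : (ρ + p) * (1 + (1 - cs2) * u2) ≠ 0 := (mul_pos hρp hEp).ne'
  have hDρn : Dρn = (ρ + p) / n := by rw [eq_div_iff hn.ne']; linarith
  set c : ℝ := -((1 + u2) * (n * T + Dps) * f / ((ρ + p) * (1 + (1 - cs2) * u2))) with hc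
  have hiu : (inner ℝ u δu : ℝ) = c * u2 := by
    rw [hδu, real_inner_smul_right, ← hu2]
  have key1 : δn * (1 + u2) + n * (c * u2) = 0 := by
    rw [hδn, hc]; field_simp; ring
  have keyM : (Dρn * δn + n * T * f + (cs2 * Dρn * δn + Dps * f)) * (1 + u2) +
      (ρ + p) * (c * u2) + (ρ + p) * (1 + u2) * c = 0 := by
    rw [hDρn, hδn, hc]; field_simp [show (1:ℝ) + u2 * (1 - cs2) ≠ 0 by rw [mul_comm]; exact hEp.ne']; ring
  have keyd : δn * ((ρ + p) * (1 + (1 - cs2) * u2)) = n * u2 * ((n * T + Dps) * f) := by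
    rw [hδn]; field_simp [show (1:ℝ) + u2 * (1 - cs2) ≠ 0 by rw [mul_comm]; exact hEp.ne']
  have hfacM : (Dρn * δn + n * T * f + (cs2 * Dρn * δn + Dps * f)) * s +
      (ρ + p) * (c * u2 / s) + (ρ + p) * s * c =
      ((Dρn * δn + n * T * f + (cs2 * Dρn * δn + Dps * f)) * (1 + u2) +
        (ρ + p) * (c * u2) + (ρ + p) * (1 + u2) * c) * ((1 + u2)⁻¹ * s) := by
    rw [div_eq_mul_inv, hsinv]; field_simp
  have hzero : (Dρn * δn + n * T * f + (cs2 * Dρn * δn + Dps * f)) * s +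
      (ρ + p) * (c * u2 / s) + (ρ + p) * s * c = 0 := by
    rw [hfacM, keyM, zero_mul]
  refine ⟨?_, ?_, ?_, ?_⟩
  · rw [hiu]
    have h : δn * s + n * (c * u2) / s =
        (δn * (1 + u2) + n * (c * u2)) * ((1 + u2)⁻¹ * s) := by
      rw [div_eq_mul_inv, hsinv]; field_simp
    rw [h, key1, zero_mul]
  · rw [hiu, hδu, smul_smul, ← add_smul, ← add_smul]
    rw [hzero, zero_smul]
  · intro δn' δu' h1 h2
    set w : ℝ := (inner ℝ u δu' : ℝ) with hw
    have e1 : δn' * (1 + u2) + n * w = 0 := by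
      have hfac : δn' * s + n * w / s = (δn' * (1 + u2) + n * w) * ((1 + u2)⁻¹ * s) := by
        rw [div_eq_mul_inv, hsinv]; field_simp
      rw [hfac] at h1
      exact (mul_eq_zero.1 h1).resolve_right
        (mul_ne_zero (inv_ne_zero h1p.ne') hsne)
    rw [← add_smul] at h2
    have e2 : (Dρn * δn' + n * T * f + (cs2 * Dρn * δn' + Dps * f)) * (1 + u2) * u2
        + (ρ + p) * w * u2 + (ρ + p) * (1 + u2) * w = 0 := by
      have h3 := congrArg (fun v => (inner ℝ u v : ℝ)) h2
      simp only [inner_add_right, real_inner_smul_right, inner_zero_right, ← hu2, ← hw] at h3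
      have hfac : ((Dρn * δn' + n * T * f + (cs2 * Dρn * δn' + Dps * f)) * s
            + (ρ + p) * (w / s)) * u2 + (ρ + p) * s * w
          = ((Dρn * δn' + n * T * f + (cs2 * Dρn * δn' + Dps * f)) * (1 + u2) * u2
            + (ρ + p) * w * u2 + (ρ + p) * (1 + u2) * w) * ((1 + u2)⁻¹ * s) := by
        rw [div_eq_mul_inv, hsinv]; field_simp
      rw [hfac] at h3
      exact (mul_eq_zero.1 h3).resolve_right
        (mul_ne_zero (inv_ne_zero h1p.ne') hsne)
    have hδn' : δn' = δn := by
      have hT1 : δn' * ((ρ + p) * (1 + (1 - cs2) * u2)) * (1 + u2)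
          = δn * ((ρ + p) * (1 + (1 - cs2) * u2)) * (1 + u2) := by
        linear_combination (-(n : ℝ)) * e2 + (ρ + p) * (1 + 2 * u2) * e1
          - (1 + u2) * u2 * (1 + cs2) * δn' * hGD - (1 + u2) * keyd
      exact mul_right_cancel₀ hDne (mul_right_cancel₀ h1p.ne' hT1)
    have hwc : w = c * u2 := by
      rw [hδn'] at e1
      have h5 : n * w = n * (c * u2) := by linear_combination e1 - key1
      exact mul_left_cancel₀ hn.ne' h5
    refine ⟨hδn', ?_⟩
    have hMne : (ρ + p) * s ≠ 0 := mul_ne_zero hρp.ne' hsne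
    have hK0 : (Dρn * δn' + n * T * f + (cs2 * Dρn * δn' + Dps * f)) * s
        + (ρ + p) * (w / s) = -(((ρ + p) * s) * c) := by
      rw [hδn', hwc]; linarith [hzero]
    rw [hK0] at h2
    rw [neg_smul, neg_add_eq_zero] at h2
    have h6 : ((ρ + p) * s) • δu' = ((ρ + p) * s) • (c • u) := by
      rw [smul_smul]; exact h2.symm
    have := smul_right_injective E hMne h6
    rw [this, hδu]
  · rw [hiu, hDρn, hδn, hc]; field_simp [show (1:ℝ) + u2 * (1 - cs2) ≠ 0 by rw [mul_comm]; exact hEp.ne']; ring
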